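/- The sequence ((n+1)^{(n+1)·arctan(n+1)})_{n≥0} belongs to the class 𝓜, i.e. it is increasing, has first term 1, and satisfies conditions (i1), (i2), (i3), (i4). -/

import Mathlib

open Filter

/-- Condition (i1): logarithmic convexity. -/
def CondI1 (L : ℕ → ℝ) : Prop := ∀ n : ℕ, (L (n + 1)) ^ 2 ≤ L n * L (n + 2)

/-- Condition (i2). -/
def CondI2 (L : ℕ → ℝ) : Prop :=
  ∃ H₁ : ℝ, 0 < H₁ ∧ ∃ H₂ : ℝ, 0 < H₂ ∧ ∀ n : ℕ, H₁ * H₂ ^ n * n.factorial ≤ L n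

/-- Condition (i3). -/
def CondI3 (L : ℕ → ℝ) : Prop :=
  ∀ s : ℝ, 1 < s →
    1 < Filter.liminf (fun n : ℕ => (L ⌊s * (n : ℝ)⌋₊ / (L n) ^ s) ^ ((1 : ℝ) / n)) Filter.atTop

/-- Condition (i4). -/
def CondI4 (L : ℕ → ℝ) : Prop :=
  ∀ δ : ℝ, 0 < δ → ∃ p : ℝ, 0 < p ∧ ∃ t : ℝ, 1 < t ∧
    ∀ n m : ℕ, L (m + n) / (L m * (1 + δ) ^ m) ≤ p * t ^ n * L n

/-- The class 𝓜 of increasing sequences of positive reals with first term 1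
satisfying (i1)-(i4). -/
def ClassM (L : ℕ → ℝ) : Prop :=
  (∀ n, 0 < L n) ∧ Monotone L ∧ L 0 = 1 ∧ CondI1 L ∧ CondI2 L ∧ CondI3 L ∧ CondI4 L


noncomputable section

namespace Stmt9Aux

open Real


def hh (y : ℝ) : ℝ := y * arctan y * log y

lemma arctan_nn {x : ℝ} (hx : 0 ≤ x) : 0 ≤ arctan x := by
  rw [← Real.arctan_zero]; exact Real.arctan_strictMono.monotone hx

lemma arctan_le_self' {x : ℝ} (hx : 0 ≤ x) : arctan x ≤ x := by
  have h := Real.le_tan (arctan_nn hx) (Real.arctan_lt_pi_div_two x)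
  rwa [Real.tan_arctan] at h

lemma arctan_lb {x : ℝ} (hx : 0 < x) : π / 2 - x⁻¹ ≤ arctan x := by
  have h1 := Real.arctan_inv_of_pos hx
  have h2 := arctan_le_self' (inv_pos.mpr hx).le
  linarith

lemma hh_nonneg {y : ℝ} (hy : 1 ≤ y) : 0 ≤ hh y :=
  mul_nonneg (mul_nonneg (by linarith) (arctan_nn (by linarith))) (Real.log_nonneg hy)

lemma hh_mono : MonotoneOn hh (Set.Ici 1) := by
  intro x hx y hy hxy
  simp only [Set.mem_Ici] at hx hy
  have h1 : x * arctan x ≤ y * arctan y :=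
    mul_le_mul hxy (Real.arctan_strictMono.monotone hxy) (arctan_nn (by linarith)) (by linarith)
  exact mul_le_mul h1 (Real.log_le_log (by linarith) hxy) (Real.log_nonneg hx)
    (mul_nonneg (by linarith) (arctan_nn (by linarith)))

def hh1 (y : ℝ) : ℝ := (arctan y + y * (1 + y ^ 2)⁻¹) * log y + arctan y

lemma hasDerivAt_hh {y : ℝ} (hy : 0 < y) : HasDerivAt hh (hh1 y) y := by
  have hne : (1 + y ^ 2) ≠ 0 := by positivity
  have h1 : HasDerivAt (fun y : ℝ => y * arctan y) (1 * arctan y + y * (1 / (1 + y ^ 2))) y :=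
    (hasDerivAt_id y).mul (Real.hasDerivAt_arctan y)
  have h2 := h1.mul (Real.hasDerivAt_log hy.ne')
  refine h2.congr_deriv ?_
  unfold hh1
  field_simp

def hh2 (y : ℝ) : ℝ :=
  (1 / (1 + y ^ 2) + (1 * (1 + y ^ 2) - y * (2 * y)) / (1 + y ^ 2) ^ 2) * log y
    + (arctan y + y * (1 + y ^ 2)⁻¹) * y⁻¹ + 1 / (1 + y ^ 2)

lemma hasDerivAt_hh1 {y : ℝ} (hy : 0 < y) : HasDerivAt hh1 (hh2 y) y := by
  have hne : (1 + y ^ 2) ≠ 0 := by positivity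
  have hsq : HasDerivAt (fun x : ℝ => 1 + x ^ 2) (2 * y) y := by
    simpa using (hasDerivAt_pow 2 y).const_add 1
  have hd : HasDerivAt (fun x : ℝ => x * (1 + x ^ 2)⁻¹)
      ((1 * (1 + y ^ 2) - y * (2 * y)) / (1 + y ^ 2) ^ 2) y := by
    have h := (hasDerivAt_id y).div hsq hne
    simp only [div_eq_mul_inv] at h ⊢
    exact h
  have hu : HasDerivAt (fun x : ℝ => arctan x + x * (1 + x ^ 2)⁻¹)
      (1 / (1 + y ^ 2) + (1 * (1 + y ^ 2) - y * (2 * y)) / (1 + y ^ 2) ^ 2) y :=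
    (Real.hasDerivAt_arctan y).add hd
  have h2 := (hu.mul (Real.hasDerivAt_log hy.ne')).add (Real.hasDerivAt_arctan y)
  exact h2

lemma hh2_nonneg {y : ℝ} (hy : 1 ≤ y) : 0 ≤ hh2 y := by
  have hy0 : (0:ℝ) < y := by linarith
  have hne : (0:ℝ) < 1 + y ^ 2 := by positivity
  have hA : 1 / (1 + y ^ 2) + (1 * (1 + y ^ 2) - y * (2 * y)) / (1 + y ^ 2) ^ 2
      = 2 / (1 + y ^ 2) ^ 2 := by
    field_simp
    ring
  unfold hh2
  rw [hA]
  have h1 : 0 ≤ 2 / (1 + y ^ 2) ^ 2 * log y :=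
    mul_nonneg (by positivity) (Real.log_nonneg hy)
  have h2 : 0 ≤ (arctan y + y * (1 + y ^ 2)⁻¹) * y⁻¹ :=
    mul_nonneg (add_nonneg (arctan_nn hy0.le) (by positivity)) (by positivity)
  have h3 : (0:ℝ) ≤ 1 / (1 + y ^ 2) := by positivity
  linarith

lemma hh_convex : ConvexOn ℝ (Set.Ici 1) hh := by
  have hint : interior (Set.Ici (1:ℝ)) = Set.Ioi 1 := interior_Ici
  refine convexOn_of_hasDerivWithinAt2_nonneg (convex_Ici 1) ?_ (f' := hh1) (f'' := hh2) ?_ ?_ ?_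
  · intro x hx
    have hx1 : (1:ℝ) ≤ x := hx
    exact (((continuousAt_id.mul Real.continuous_arctan.continuousAt).mul
      (Real.continuousAt_log (by linarith))).continuousWithinAt)
  · intro x hx
    rw [hint] at hx
    exact (hasDerivAt_hh (by exact lt_trans one_pos hx)).hasDerivWithinAt
  · intro x hx
    rw [hint] at hx
    exact (hasDerivAt_hh1 (lt_trans one_pos hx)).hasDerivWithinAt
  · intro x hx
    rw [hint] at hx
    exact hh2_nonneg (le_of_lt hx)

lemma hh_midpoint {x y : ℝ} (hx : 1 ≤ x) (hy : 1 ≤ y) :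
    2 * hh ((x + y) / 2) ≤ hh x + hh y := by
  have := hh_convex.2 (Set.mem_Ici.mpr hx) (Set.mem_Ici.mpr hy)
    (by norm_num : (0:ℝ) ≤ 1/2) (by norm_num : (0:ℝ) ≤ 1/2) (by norm_num)
  simp only [smul_eq_mul] at this
  have he : (1:ℝ)/2 * x + 1/2 * y = (x + y) / 2 := by ring
  rw [he] at this
  linarith

lemma hh_le {y : ℝ} (hy : 1 ≤ y) : hh y ≤ π / 2 * (y * log y) := by
  have h := (Real.arctan_lt_pi_div_two y).le
  have key : 0 ≤ (π / 2 - arctan y) * (y * log y) :=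
    mul_nonneg (by linarith) (mul_nonneg (by linarith) (Real.log_nonneg hy))
  unfold hh; nlinarith [key]

lemma hh_ge {y : ℝ} (hy : 1 ≤ y) : π / 2 * (y * log y) - log y ≤ hh y := by
  have hy0 : (0:ℝ) < y := by linarith
  have h1 := arctan_lb hy0
  have h2 : (π / 2 - y⁻¹) * (y * log y) ≤ arctan y * (y * log y) :=
    mul_le_mul_of_nonneg_right h1 (mul_nonneg hy0.le (Real.log_nonneg hy))
  have h3 : (π / 2 - y⁻¹) * (y * log y) = π / 2 * (y * log y) - log y := by
    field_simp
  have h4 : hh y = arctan y * (y * log y) := by unfold hh; ring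
  linarith

lemma log_le_lin {x a b : ℝ} (hx : 0 < x) (ha : 0 < a) (hb : 0 < b) (hab : 1 ≤ a * b) :
    log x ≤ a * x + b := by
  have hsx := Real.sq_sqrt hx.le
  have h1 : log x ≤ 2 * Real.sqrt x := by
    have h := Real.log_le_sub_one_of_pos (Real.sqrt_pos.mpr hx)
    rw [Real.log_sqrt hx.le] at h
    linarith
  have hsa := Real.sq_sqrt ha.le
  have hsb := Real.sq_sqrt hb.le
  have hab' : 1 ≤ Real.sqrt a * Real.sqrt b := by
    rw [← Real.sqrt_mul ha.le]
    exact Real.one_le_sqrt.mpr hab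
  nlinarith [sq_nonneg (Real.sqrt a * Real.sqrt x - Real.sqrt b), Real.sqrt_nonneg x,
    Real.sqrt_nonneg a, Real.sqrt_nonneg b]

lemma split_bound {M N ε : ℝ} (hM : 1 ≤ M) (hN : 1 ≤ N) (hε : 0 < ε) :
    (M + N) * log (M + N) - M * log M - N * log N ≤ ε * M + (1 + ε + ε⁻¹) * N := by
  have hM0 : (0:ℝ) < M := by linarith
  have hN0 : (0:ℝ) < N := by linarith
  have hMN : (0:ℝ) < M + N := by linarith
  have e1 : log ((M + N) / M) = log (M + N) - log M := Real.log_div hMN.ne' hM0.ne'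
  have e2 : log ((M + N) / N) = log (M + N) - log N := Real.log_div hMN.ne' hN0.ne'
  have b1 : log ((M + N) / M) ≤ N / M := by
    have h := Real.log_le_sub_one_of_pos (show (0:ℝ) < (M + N) / M by positivity)
    have h2 : (M + N) / M - 1 = N / M := by field_simp; ring
    linarith
  have b2 : log ((M + N) / N) ≤ ε * ((M + N) / N) + ε⁻¹ :=
    log_le_lin (by positivity) hε (inv_pos.mpr hε) (by rw [mul_inv_cancel₀ hε.ne'])
  have c1 : M * (log (M + N) - log M) ≤ N := by
    rw [← e1]
    calc M * log ((M + N) / M) ≤ M * (N / M) := by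
          exact mul_le_mul_of_nonneg_left b1 hM0.le
      _ = N := by field_simp
  have c2 : N * (log (M + N) - log N) ≤ ε * (M + N) + ε⁻¹ * N := by
    rw [← e2]
    calc N * log ((M + N) / N) ≤ N * (ε * ((M + N) / N) + ε⁻¹) :=
          mul_le_mul_of_nonneg_left b2 hN0.le
      _ = ε * (M + N) + ε⁻¹ * N := by field_simp
  nlinarith [c1, c2]

lemma hh_add_bound {d : ℝ} (hd : 0 < d) : ∃ C : ℝ, 1 ≤ C ∧ ∀ M N : ℝ, 1 ≤ M → 1 ≤ N →
    hh (M + N) ≤ hh M + hh N + d * M + C * N + C := by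
  have hπ := Real.pi_pos
  have hQ0 : (0:ℝ) ≤ π / 2 * (1 + d / π + π / d) := by positivity
  set Q := π / 2 * (1 + d / π + π / d) with hQdef
  have hd4 : (0:ℝ) < 4 / d := by positivity
  refine ⟨Q + 2 + 4 / d, by linarith, fun M N hM hN => ?_⟩
  have h1 := hh_le (show (1:ℝ) ≤ M + N by linarith)
  have h2 := hh_ge hM
  have h3 := hh_ge hN
  have h4 := split_bound hM hN (show (0:ℝ) < d / π by positivity)
  have h4' := mul_le_mul_of_nonneg_left h4 (le_of_lt (show (0:ℝ) < π / 2 by positivity))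
  have heq : π / 2 * (d / π * M + (1 + d / π + (d / π)⁻¹) * N) = d / 2 * M + Q * N := by
    rw [hQdef]
    field_simp
  rw [heq] at h4'
  have h5 : log M ≤ d / 4 * M + 4 / d :=
    log_le_lin (by linarith) (by positivity) (by positivity) (by field_simp; norm_num)
  have h6 : log N ≤ N := by
    have := Real.log_le_sub_one_of_pos (show (0:ℝ) < N by linarith)
    linarith
  have hexp : π / 2 * ((M + N) * log (M + N)) = π / 2 * (M * log M) + π / 2 * (N * log N)
      + π / 2 * ((M + N) * log (M + N) - M * log M - N * log N) := by ring
  have e1 : (0:ℝ) ≤ d * (M - 1) := mul_nonneg hd.le (by linarith)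
  have e2 : (0:ℝ) ≤ Q * (N - 1) := mul_nonneg hQ0 (by linarith)
  have e3 : (0:ℝ) ≤ 4 / d * (N - 1) := mul_nonneg hd4.le (by linarith)
  nlinarith [h4', h1, h2, h3, h5, h6, hexp, e1, e2, e3]



noncomputable def LL : ℕ → ℝ := fun n => Real.exp (hh ((n : ℝ) + 1))

lemma L_eq_LL : (fun n : ℕ => ((n : ℝ) + 1) ^ (((n : ℝ) + 1) * Real.arctan ((n : ℝ) + 1))) = LL := by
  funext n
  rw [LL, Real.rpow_def_of_pos (by positivity)]
  exact congrArg Real.exp (by rw [hh]; ring)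

lemma one_le_cast_add_one (n : ℕ) : (1 : ℝ) ≤ (n : ℝ) + 1 := by
  have : (0:ℝ) ≤ (n:ℝ) := Nat.cast_nonneg n
  linarith

lemma LL_pos (n : ℕ) : 0 < LL n := Real.exp_pos _

lemma LL_mono : Monotone LL := by
  refine monotone_nat_of_le_succ fun n => ?_
  rw [LL]
  refine Real.exp_le_exp.mpr (hh_mono (Set.mem_Ici.mpr (one_le_cast_add_one n))
    (Set.mem_Ici.mpr (one_le_cast_add_one (n+1))) ?_)
  push_cast
  linarith

lemma LL_zero : LL 0 = 1 := by
  rw [LL]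
  norm_num [hh]

lemma LL_i1 : CondI1 LL := by
  intro n
  set x : ℝ := (n : ℝ)
  have hx0 : (0:ℝ) ≤ x := Nat.cast_nonneg n
  have h := hh_midpoint (x := x + 1) (y := x + 3) (by linarith) (by linarith)
  rw [show (x + 1 + (x + 3)) / 2 = x + 2 by ring] at h
  simp only [LL]
  rw [← Real.exp_add, sq, ← Real.exp_add]
  push_cast
  refine Real.exp_le_exp.mpr ?_
  ring_nf
  ring_nf at h
  linarith

lemma arctan_two_gt_one : (1:ℝ) < Real.arctan 2 := by
  have h1 := arctan_lb (show (0:ℝ) < 2 by norm_num)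
  have h2 := Real.pi_gt_three
  norm_num at h1
  linarith

lemma LL_i2 : CondI2 LL := by
  refine ⟨1, one_pos, 1, one_pos, fun n => ?_⟩
  rw [one_pow, one_mul, one_mul]
  match n with
  | 0 => simp [LL, hh]
  | Nat.succ k =>
    set n := k + 1
    have hx1 : (2:ℝ) ≤ (n:ℝ) + 1 := by
      have : (1:ℝ) ≤ (n:ℝ) := by exact_mod_cast Nat.one_le_iff_ne_zero.mpr (by omega)
      linarith
    have harc : (1:ℝ) ≤ Real.arctan ((n:ℝ) + 1) :=
      le_trans arctan_two_gt_one.le (Real.arctan_strictMono.monotone hx1)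
    have h1 : (n.factorial : ℝ) ≤ ((n:ℝ)) ^ (n:ℕ) := by
      exact_mod_cast Nat.cast_le.mpr (Nat.factorial_le_pow n)
    have h2 : ((n:ℝ)) ^ (n:ℕ) ≤ ((n:ℝ) + 1) ^ ((n + 1:ℕ)) := by
      calc ((n:ℝ)) ^ (n:ℕ) ≤ ((n:ℝ) + 1) ^ (n:ℕ) :=
            pow_le_pow_left₀ (Nat.cast_nonneg n) (by linarith) n
        _ ≤ ((n:ℝ) + 1) ^ ((n + 1:ℕ)) := pow_le_pow_right₀ (by linarith) (by omega)
    have h3 : ((n:ℝ) + 1) ^ ((n + 1:ℕ)) = ((n:ℝ) + 1) ^ (((n:ℝ) + 1)) := by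
      rw [← Real.rpow_natCast ((n:ℝ) + 1) (n+1)]
      push_cast
      ring_nf
    have h4 : ((n:ℝ) + 1) ^ (((n:ℝ) + 1) : ℝ) ≤ LL n := by
      rw [← L_eq_LL]
      refine Real.rpow_le_rpow_of_exponent_le (by linarith) ?_
      nlinarith [harc]
    calc (n.factorial : ℝ) ≤ ((n:ℝ)) ^ (n:ℕ) := h1
      _ ≤ ((n:ℝ) + 1) ^ ((n + 1:ℕ)) := h2
      _ = ((n:ℝ) + 1) ^ (((n:ℝ) + 1) : ℝ) := h3
      _ ≤ LL n := h4

lemma LL_i4 : CondI4 LL := by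
  intro δ hδ
  have hδ1 : (0:ℝ) < 1 + δ := by linarith
  set d := Real.log (1 + δ) with hdd
  have hd : 0 < d := Real.log_pos (by linarith)
  obtain ⟨C, hC1, hC⟩ := hh_add_bound hd
  refine ⟨Real.exp (d + 2 * C), Real.exp_pos _, Real.exp C,
    Real.one_lt_exp_iff.mpr (by linarith), fun n m => ?_⟩
  have key : hh ((m:ℝ) + (n:ℝ) + 1 + 1) ≤ hh ((m:ℝ) + 1) + hh ((n:ℝ) + 1)
      + d * (m:ℝ) + C * (n:ℝ) + (d + 2 * C) := by
    have h := hC ((m:ℝ) + 1) ((n:ℝ) + 1) (one_le_cast_add_one m) (one_le_cast_add_one n)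
    rw [show (m:ℝ) + 1 + ((n:ℝ) + 1) = (m:ℝ) + (n:ℝ) + 1 + 1 by ring] at h
    nlinarith [h]
  have key2 : hh ((m:ℝ) + (n:ℝ) + 1) ≤ hh ((m:ℝ) + 1) + hh ((n:ℝ) + 1)
      + d * (m:ℝ) + C * (n:ℝ) + (d + 2 * C) := by
    refine le_trans (hh_mono (Set.mem_Ici.mpr ?_) (Set.mem_Ici.mpr ?_) (by linarith)) key
    · have h0 : (0:ℝ) ≤ (m:ℝ) := Nat.cast_nonneg m
      have h1 : (0:ℝ) ≤ (n:ℝ) := Nat.cast_nonneg n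
      linarith
    · have h0 : (0:ℝ) ≤ (m:ℝ) := Nat.cast_nonneg m
      have h1 : (0:ℝ) ≤ (n:ℝ) := Nat.cast_nonneg n
      linarith
  simp only [LL]
  rw [show (1:ℝ) + δ = Real.exp d from (Real.exp_log hδ1).symm,
    ← Real.exp_nat_mul d m, ← Real.exp_add, ← Real.exp_nat_mul C n,
    ← Real.exp_add, ← Real.exp_add, ← Real.exp_sub]
  refine Real.exp_le_exp.mpr ?_
  push_cast
  linarith [key2]

lemma lower_core {s x M : ℝ} (hs : 1 < s) (hx1 : 1 ≤ x) (hxa : (s - 1)⁻¹ ≤ x)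
    (hxb : 4 / Real.log s * (1 + Real.log s / 4 + 4 / Real.log s) ≤ x)
    (hM : s * x ≤ M + 1) :
    3 * s * Real.log s / 8 * x ≤ hh (M + 1) - s * hh (x + 1) := by
  have hs0 : (0:ℝ) < s := by linarith
  have ha : 0 < Real.log s := Real.log_pos hs
  set a := Real.log s with hadef
  have hx0 : (0:ℝ) < x := by linarith
  have hsx1 : (1:ℝ) ≤ s * x := by nlinarith
  have hsxx : x + 1 ≤ s * x := by
    have h1 : (1:ℝ) ≤ x * (s - 1) := by
      calc (1:ℝ) = (s - 1)⁻¹ * (s - 1) := (inv_mul_cancel₀ (by linarith)).symm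
        _ ≤ x * (s - 1) := mul_le_mul_of_nonneg_right hxa (by linarith)
    nlinarith
  have e1 : Real.log (s * x) = a + Real.log x := by
    rw [Real.log_mul hs0.ne' (by linarith)]
  have e2 : Real.log (x + 1) - Real.log x ≤ x⁻¹ := by
    have h := Real.log_le_sub_one_of_pos (show (0:ℝ) < (x + 1) / x by positivity)
    rw [Real.log_div (by linarith) (by linarith)] at h
    have h2 : (x + 1) / x - 1 = x⁻¹ := by field_simp; ring
    linarith
  have e2' : x * (Real.log (x + 1) - Real.log x) ≤ 1 := by
    have h := mul_le_mul_of_nonneg_left e2 hx0.le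
    rwa [mul_inv_cancel₀ hx0.ne'] at h
  have e3 : Real.log (x + 1) ≤ a / 4 * (x + 1) + 4 / a :=
    log_le_lin (by linarith) (by positivity) (by positivity) (by field_simp; norm_num)
  have e4 : 1 + a / 4 + 4 / a ≤ a / 4 * x := by
    have h := mul_le_mul_of_nonneg_left hxb (show (0:ℝ) ≤ a / 4 by positivity)
    have h2 : a / 4 * (4 / a * (1 + a / 4 + 4 / a)) = 1 + a / 4 + 4 / a := by
      field_simp
    linarith
  have hB : a / 2 * x ≤ x * Real.log (s * x) - (x + 1) * Real.log (x + 1) := by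
    rw [e1]
    nlinarith [e2', e3, e4]
  have harc : Real.arctan (x + 1) ≤ Real.arctan (s * x) :=
    Real.arctan_strictMono.monotone (by linarith)
  have harc1 : (3:ℝ)/4 ≤ Real.arctan (x + 1) := by
    have h1 : π / 4 ≤ Real.arctan (x + 1) := by
      rw [← Real.arctan_one]
      exact Real.arctan_strictMono.monotone (by linarith)
    have h2 := Real.pi_gt_three
    linarith
  have hlogsx : (0:ℝ) ≤ Real.log (s * x) := Real.log_nonneg hsx1
  have k1 : s * Real.arctan (x + 1) * (x * Real.log (s * x)) ≤ hh (s * x) := by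
    unfold hh
    nlinarith [mul_nonneg (mul_nonneg (mul_nonneg hs0.le hx0.le) hlogsx)
      (sub_nonneg.mpr harc)]
  have k2 : hh (x + 1) = Real.arctan (x + 1) * ((x + 1) * Real.log (x + 1)) := by
    unfold hh; ring
  have hmono : hh (s * x) ≤ hh (M + 1) :=
    hh_mono (Set.mem_Ici.mpr hsx1) (Set.mem_Ici.mpr (by linarith)) hM
  have t1 : s * Real.arctan (x + 1) * (a / 2 * x)
      ≤ s * Real.arctan (x + 1) * (x * Real.log (s * x) - (x + 1) * Real.log (x + 1)) :=
    mul_le_mul_of_nonneg_left hB (mul_nonneg hs0.le (by linarith))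
  have t2 : 3 * s * a / 8 * x ≤ s * Real.arctan (x + 1) * (a / 2 * x) := by
    nlinarith [mul_nonneg (mul_nonneg (sub_nonneg.mpr harc1) hs0.le)
      (show (0:ℝ) ≤ a / 2 * x by positivity)]
  nlinarith [t1, t2, k1, hmono, k2]

lemma upper_core {s x M : ℝ} (hs : 1 < s) (hx1 : 1 ≤ x) (hM : M ≤ s * x) (hM0 : 0 ≤ M) :
    hh (M + 1) - s * hh (x + 1) ≤ (π / 2 * (s + 1) * Real.log s + s) * x := by
  have hs0 : (0:ℝ) < s := by linarith
  have ha : 0 ≤ Real.log s := Real.log_nonneg hs.le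
  set a := Real.log s with hadef
  have hx0 : (0:ℝ) < x := by linarith
  have hmono : hh (M + 1) ≤ hh (s * x + 1) :=
    hh_mono (Set.mem_Ici.mpr (by linarith)) (Set.mem_Ici.mpr (by nlinarith)) (by linarith)
  have u1 : hh (s * x + 1) ≤ π / 2 * ((s * x + 1) * Real.log (s * x + 1)) :=
    hh_le (by nlinarith)
  have u2 : Real.log (s * x + 1) ≤ a + Real.log (x + 1) := by
    have h1 : s * x + 1 ≤ s * (x + 1) := by nlinarith
    have h2 := Real.log_le_log (by positivity) h1
    rw [Real.log_mul hs0.ne' (by linarith)] at h2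
    linarith
  have u3 := hh_ge (show (1:ℝ) ≤ x + 1 by linarith)
  have u4 : Real.log (x + 1) ≤ x := by
    have := Real.log_le_sub_one_of_pos (show (0:ℝ) < x + 1 by linarith)
    linarith
  have hlx : (0:ℝ) ≤ Real.log (x + 1) := Real.log_nonneg (by linarith)
  have hπ := Real.pi_pos
  nlinarith [hmono, u1, hlx,
    mul_le_mul_of_nonneg_left u2 (show (0:ℝ) ≤ π / 2 * (s * x + 1) by positivity),
    mul_le_mul_of_nonneg_left u3 hs0.le,
    mul_le_mul_of_nonneg_left u4 hs0.le,
    mul_nonneg (mul_nonneg (show (0:ℝ) ≤ π / 2 by positivity)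
      (by linarith : (0:ℝ) ≤ s - 1)) hlx,
    mul_nonneg (mul_nonneg (show (0:ℝ) ≤ π / 2 by positivity) ha)
      (by linarith : (0:ℝ) ≤ x - 1)]

lemma LL_i3 : CondI3 LL := by
  intro s hs
  have hs0 : (0:ℝ) < s := by linarith
  have ha : 0 < Real.log s := Real.log_pos hs
  have hc : 0 < 3 * s * Real.log s / 8 := by positivity
  have hfun : ∀ n : ℕ, 1 ≤ n →
      (LL ⌊s * (n : ℝ)⌋₊ / (LL n) ^ s) ^ ((1:ℝ) / n)
        = Real.exp ((hh ((⌊s * (n : ℝ)⌋₊ : ℝ) + 1) - s * hh ((n:ℝ) + 1)) * (1 / (n:ℝ))) := by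
    intro n hn
    simp only [LL]
    rw [← Real.exp_mul, ← Real.exp_sub, ← Real.exp_mul]
    exact congrArg Real.exp (by ring)
  obtain ⟨N₀, hN₀⟩ := exists_nat_ge
    (max ((s - 1)⁻¹) (4 / Real.log s * (1 + Real.log s / 4 + 4 / Real.log s)))
  have hlow : ∀ᶠ n : ℕ in atTop,
      Real.exp (3 * s * Real.log s / 8) ≤ (LL ⌊s * (n : ℝ)⌋₊ / (LL n) ^ s) ^ ((1:ℝ) / n) := by
    filter_upwards [Filter.eventually_ge_atTop (max N₀ 1)] with n hn
    have hn1 : 1 ≤ n := le_trans (le_max_right _ _) hn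
    have hnN : (N₀ : ℝ) ≤ (n : ℝ) := Nat.cast_le.mpr (le_trans (le_max_left _ _) hn)
    have hx1 : (1:ℝ) ≤ (n:ℝ) := by exact_mod_cast hn1
    have hx0 : (0:ℝ) < (n:ℝ) := by linarith
    have key := lower_core (x := (n:ℝ)) (M := ((⌊s * (n:ℝ)⌋₊ : ℕ) : ℝ)) hs hx1
      (le_trans (le_trans (le_max_left _ _) hN₀) hnN)
      (le_trans (le_trans (le_max_right _ _) hN₀) hnN)
      (Nat.lt_floor_add_one _).le
    rw [hfun n hn1]
    refine Real.exp_le_exp.mpr ?_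
    rw [mul_one_div, le_div_iff₀ hx0]
    linarith [key]
  have hup : ∀ᶠ n : ℕ in atTop,
      (LL ⌊s * (n : ℝ)⌋₊ / (LL n) ^ s) ^ ((1:ℝ) / n)
        ≤ Real.exp (π / 2 * (s + 1) * Real.log s + s) := by
    filter_upwards [Filter.eventually_ge_atTop 1] with n hn1
    have hx1 : (1:ℝ) ≤ (n:ℝ) := by exact_mod_cast hn1
    have hx0 : (0:ℝ) < (n:ℝ) := by linarith
    have key := upper_core (x := (n:ℝ)) (M := ((⌊s * (n:ℝ)⌋₊ : ℕ) : ℝ)) hs hx1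
      (Nat.floor_le (by positivity)) (Nat.cast_nonneg _)
    rw [hfun n hn1]
    refine Real.exp_le_exp.mpr ?_
    rw [mul_one_div, div_le_iff₀ hx0]
    linarith [key]
  have hbdd : Filter.IsBoundedUnder (· ≤ ·) atTop
      (fun n : ℕ => (LL ⌊s * (n : ℝ)⌋₊ / (LL n) ^ s) ^ ((1:ℝ) / n)) :=
    Filter.isBoundedUnder_of_eventually_le hup
  calc (1:ℝ) < Real.exp (3 * s * Real.log s / 8) := Real.one_lt_exp_iff.mpr hc
    _ ≤ _ := Filter.le_liminf_of_le hbdd.isCoboundedUnder_ge hlow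


end Stmt9Aux

end

theorem stmt_9 :
    ClassM (fun n : ℕ => ((n : ℝ) + 1) ^ (((n : ℝ) + 1) * Real.arctan ((n : ℝ) + 1))) := by
  rw [Stmt9Aux.L_eq_LL]
  exact ⟨Stmt9Aux.LL_pos, Stmt9Aux.LL_mono, Stmt9Aux.LL_zero, Stmt9Aux.LL_i1,
    Stmt9Aux.LL_i2, Stmt9Aux.LL_i3, Stmt9Aux.LL_i4⟩
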